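/- For every real q>1, every n≥1, every k≥0 and every x∈(0,∞), the q-derivative of the q-Szász basis function satisfies x·D_q s_{n,k}(q;x) = [n]_q·([k]_q/[n]_q − x)·s_{n,k}(q;x). -/

import Mathlib

open scoped BigOperators

/-- The `q`-integer `[k]_q = (q^k - 1)/(q - 1)`. -/
noncomputable def qNat (q : ℝ) (k : ℕ) : ℝ := (q ^ k - 1) / (q - 1)

/-- The `q`-factorial `[k]_q! = [1]_q [2]_q ⋯ [k]_q`, with `[0]_q! = 1`. -/
noncomputable def qFactorial (q : ℝ) : ℕ → ℝ
  | 0 => 1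
  | k + 1 => qFactorial q k * qNat q (k + 1)

/-- The `q`-exponential function `e_q(z) = ∑_{k=0}^∞ z^k/[k]_q!`. -/
noncomputable def qExp (q z : ℝ) : ℝ := ∑' k : ℕ, z ^ k / qFactorial q k

/-- The `q`-Szász basis function
`s_{n,k}(q;x) = q^{-k(k-1)/2} ([n]_q^k x^k/[k]_q!) e_q(-[n]_q q^{-k} x)`. -/
noncomputable def qSzaszBasis (q : ℝ) (n k : ℕ) (x : ℝ) : ℝ :=
  (q ^ (k * (k - 1) / 2))⁻¹ * (qNat q n ^ k * x ^ k / qFactorial q k) *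
    qExp q (-(qNat q n) * q ^ (-(k : ℤ)) * x)

/-- The `q`-Szász operator `M_{n,q}(f;x) = ∑_{k=0}^∞ f([k]_q/[n]_q) s_{n,k}(q;x)`. -/
noncomputable def qSzasz (q : ℝ) (n : ℕ) (f : ℝ → ℝ) (x : ℝ) : ℝ :=
  ∑' k : ℕ, f (qNat q k / qNat q n) * qSzaszBasis q n k x

/-- The weight `w_0(x) = 1`, `w_p(x) = (1 + x^p)⁻¹` for `p ≥ 1`. -/
noncomputable def weight (p : ℕ) (x : ℝ) : ℝ := if p = 0 then 1 else (1 + x ^ p)⁻¹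

/-- The weighted sup-norm `‖f‖_p = sup_{x ≥ 0} w_p(x)|f(x)|`. -/
noncomputable def wnorm (p : ℕ) (f : ℝ → ℝ) : ℝ :=
  ⨆ x : Set.Ici (0 : ℝ), weight p x.1 * |f x.1|

/-- Membership in the space `C_p`: `f` is continuous on `[0,∞)` and `w_p f` is
uniformly continuous and bounded on `[0,∞)`. -/
def MemCp (p : ℕ) (f : ℝ → ℝ) : Prop :=
  ContinuousOn f (Set.Ici 0) ∧
  UniformContinuousOn (fun x => weight p x * f x) (Set.Ici 0) ∧
  ∃ M : ℝ, ∀ x ∈ Set.Ici (0 : ℝ), |weight p x * f x| ≤ M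

/-- The second difference `Δ_h² f(x) = f(x+2h) - 2f(x+h) + f(x)`. -/
noncomputable def delta2 (f : ℝ → ℝ) (h x : ℝ) : ℝ := f (x + 2 * h) - 2 * f (x + h) + f x

/-- The second modulus of smoothness `ω_p²(f;δ) = sup_{0<h≤δ} ‖Δ_h² f‖_p`. -/
noncomputable def omega2 (p : ℕ) (f : ℝ → ℝ) (δ : ℝ) : ℝ :=
  ⨆ h : {h : ℝ // 0 < h ∧ h ≤ δ}, wnorm p (fun x => delta2 f h.1 x)

/-- The (first) modulus of continuity on `[0,∞)`:
`ω(g;δ) = sup {|g(s)-g(t)| : s,t ≥ 0, |s-t| ≤ δ}`. -/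
noncomputable def omega1 (g : ℝ → ℝ) (δ : ℝ) : ℝ :=
  sSup {d : ℝ | ∃ s t : ℝ, 0 ≤ s ∧ 0 ≤ t ∧ |s - t| ≤ δ ∧ d = |g s - g t|}

/-- The `q`-derivative `(D_q g)(x) = (g(qx) - g(x))/((q-1)x)`. -/
noncomputable def qDeriv (q : ℝ) (g : ℝ → ℝ) (x : ℝ) : ℝ := (g (q * x) - g x) / ((q - 1) * x)

/-- The `q`-Stirling-type numbers: `S_q(0,0)=1`, `S_q(m,0)=0` for `m>0`,
`S_q(m,j)=0` for `m<j`, and `S_q(m+1,j)=[j]_q S_q(m,j) + S_q(m,j-1)`. -/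
noncomputable def qStirling (q : ℝ) : ℕ → ℕ → ℝ
  | 0, 0 => 1
  | 0, _ + 1 => 0
  | _ + 1, 0 => 0
  | m + 1, j + 1 => qNat q (j + 1) * qStirling q m (j + 1) + qStirling q m j

lemma qNat_pos' {q : ℝ} (hq : 1 < q) (k : ℕ) (hk : 1 ≤ k) : 0 < qNat q k := by
  have h1 : (1:ℝ) < q ^ k := one_lt_pow₀ hq (by omega)
  exact div_pos (by linarith) (by linarith)

lemma qFactorial_pos {q : ℝ} (hq : 1 < q) : ∀ k, 0 < qFactorial q k
  | 0 => by simp [qFactorial]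
  | k + 1 => by
    rw [qFactorial]
    exact mul_pos (qFactorial_pos hq k) (qNat_pos' hq (k+1) (by omega))

lemma summable_qExp {q : ℝ} (hq : 1 < q) (z : ℝ) :
    Summable (fun k : ℕ => z ^ k / qFactorial q k) := by
  obtain ⟨N, hN⟩ : ∃ N : ℕ, 2 * |z| ≤ q ^ N := by
    obtain ⟨N, hN⟩ := pow_unbounded_of_one_lt (2 * |z|) hq
    exact ⟨N, hN.le⟩
  apply summable_of_ratio_norm_eventually_le (r := 1/2) (by norm_num)
  filter_upwards [Filter.eventually_ge_atTop N] with k hk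
  have hfk := qFactorial_pos hq k
  have hA : 0 < qNat q (k+1) := qNat_pos' hq (k+1) (by omega)
  have hqk1 : (1:ℝ) ≤ q ^ k := one_le_pow₀ hq.le
  have hAbig : q ^ k ≤ qNat q (k+1) := by
    rw [qNat, le_div_iff₀ (by linarith)]
    have : q ^ (k+1) = q ^ k * q := pow_succ q k
    nlinarith
  have h2z : 2 * |z| ≤ qNat q (k+1) := by
    calc 2 * |z| ≤ q ^ N := hN
    _ ≤ q ^ k := pow_le_pow_right₀ hq.le hk
    _ ≤ qNat q (k+1) := hAbig
  have hFk1 : qFactorial q (k+1) = qFactorial q k * qNat q (k+1) := rfl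
  rw [hFk1, Real.norm_eq_abs, Real.norm_eq_abs, abs_div, abs_div, abs_pow, abs_pow,
    abs_of_pos (mul_pos hfk hA), abs_of_pos hfk]
  have hsplit : |z| ^ (k+1) / (qFactorial q k * qNat q (k+1))
      = (|z| / qNat q (k+1)) * (|z| ^ k / qFactorial q k) := by
    rw [pow_succ]; field_simp
  rw [hsplit]
  have hratio : |z| / qNat q (k+1) ≤ 1/2 := by
    rw [div_le_iff₀ hA]; linarith
  exact mul_le_mul_of_nonneg_right hratio (by positivity)

lemma qExp_q_mul {q : ℝ} (hq : 1 < q) (z : ℝ) :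
    qExp q (q * z) = (1 + (q - 1) * z) * qExp q z := by
  have hq1 : q - 1 ≠ 0 := sub_ne_zero.mpr (ne_of_gt hq)
  have hs := summable_qExp hq z
  have hs' := summable_qExp hq (q * z)
  have hd := hs'.sub hs
  have h1 : qExp q (q * z) - qExp q z
      = ∑' k : ℕ, ((q*z) ^ k / qFactorial q k - z ^ k / qFactorial q k) := by
    rw [qExp, qExp, ← Summable.tsum_sub hs' hs]
  have h2 : ∀ k : ℕ, (q*z) ^ (k+1) / qFactorial q (k+1) - z ^ (k+1) / qFactorial q (k+1)
      = (q - 1) * z * (z ^ k / qFactorial q k) := by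
    intro k
    have hfk := (qFactorial_pos hq k).ne'
    have hA := (qNat_pos' hq (k+1) (by omega)).ne'
    have hFk1 : qFactorial q (k+1) = qFactorial q k * qNat q (k+1) := rfl
    have hqn : (q - 1) * qNat q (k+1) = q ^ (k+1) - 1 := by
      rw [qNat]; field_simp
    rw [hFk1, mul_pow]
    field_simp
    linear_combination (-(z ^ (k+1))) * hqn
  have h3 : ∑' k : ℕ, ((q*z) ^ k / qFactorial q k - z ^ k / qFactorial q k)
      = (q - 1) * z * qExp q z := by
    rw [Summable.tsum_eq_zero_add hd]
    simp only [h2]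
    rw [tsum_mul_left]
    simp [qFactorial, qExp]
  have := h1.trans h3
  linarith [this]

/-- `x · D_q s_{n,k}(q;x) = [n]_q ([k]_q/[n]_q - x) s_{n,k}(q;x)`. -/
theorem qSzaszBasis_qDeriv (q : ℝ) (hq : 1 < q) (n : ℕ) (hn : 1 ≤ n)
    (k : ℕ) (x : ℝ) (hx : 0 < x) :
    x * qDeriv q (fun y => qSzaszBasis q n k y) x =
      qNat q n * (qNat q k / qNat q n - x) * qSzaszBasis q n k x := by
  have hq1 : q - 1 ≠ 0 := sub_ne_zero.mpr (ne_of_gt hq)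
  have hq0 : 0 < q := lt_trans one_pos hq
  have hnpos : 0 < qNat q n := qNat_pos' hq n hn
  have hqk : (0:ℝ) < q ^ k := pow_pos hq0 k
  have hqkk : (0:ℝ) < q ^ (k*(k-1)/2) := pow_pos hq0 _
  have hfk : 0 < qFactorial q k := qFactorial_pos hq k
  have hzpow : (q:ℝ) ^ (-(k:ℤ)) = (q ^ k)⁻¹ := by
    rw [zpow_neg, zpow_natCast]
  have harg : -(qNat q n) * q ^ (-(k:ℤ)) * (q * x)
      = q * (-(qNat q n) * q ^ (-(k:ℤ)) * x) := by ring
  simp only [qDeriv, qSzaszBasis, harg, qExp_q_mul hq]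
  set E := qExp q (-(qNat q n) * q ^ (-(k:ℤ)) * x) with hE
  have hqn1 : q ^ n - 1 ≠ 0 := by
    have : (1:ℝ) < q ^ n := one_lt_pow₀ hq (by omega)
    linarith
  rw [hzpow, qNat, qNat]
  field_simp
  ring
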